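/- arXiv:1712.03793 — 2 statements merged into one kernel-verified Lean document; each statement's English description precedes it below -/
import Mathlib

section
/- For a > b > 0, the function h*(t) = −arctan((t⁻¹ + a − b)/(t⁻¹ + a + b)) is concave on (0, ∞); its second derivative equals −8b(a + t(a² + b²)) / ((1 + t(a − b))² + (1 + t(a + b))²)² ≤ 0 for all t > 0. -/
open Set Real

private lemma auxD_pos (a b : ℝ) (hb : 0 < b) (t : ℝ) :
    0 < (1 + t * (a - b)) ^ 2 + (1 + t * (a + b)) ^ 2 := by
  by_contra h
  push_neg at h
  have key : (2 * (a ^ 2 + b ^ 2)) * ((1 + t * (a - b)) ^ 2 + (1 + t * (a + b)) ^ 2) =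
      ((a - b) * (1 + t * (a - b)) + (a + b) * (1 + t * (a + b))) ^ 2 + 4 * b ^ 2 := by ring
  have h2 : (0:ℝ) < 2 * (a ^ 2 + b ^ 2) := by positivity
  have h3 := mul_nonpos_of_nonneg_of_nonpos h2.le h
  nlinarith [sq_nonneg ((a - b) * (1 + t * (a - b)) + (a + b) * (1 + t * (a + b))), mul_pos hb hb]

private lemma auxF' (a b : ℝ) (hab : a > b) (hb : 0 < b) (t : ℝ) (ht : 0 < t) :
    HasDerivAt (fun t : ℝ => -Real.arctan ((t⁻¹ + a - b) / (t⁻¹ + a + b)))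
      (2 * b / ((1 + t * (a - b)) ^ 2 + (1 + t * (a + b)) ^ 2)) t := by
  have ha : 0 < a := hb.trans hab
  have htne : t ≠ 0 := ht.ne'
  have hti : 0 < t⁻¹ := inv_pos.mpr ht
  have hvpos : (0:ℝ) < t⁻¹ + a + b := by linarith
  have hwpos : (0:ℝ) < 1 + t * (a + b) := by nlinarith
  have h1 : HasDerivAt (fun s : ℝ => s⁻¹ + a - b) (-(t ^ 2)⁻¹) t := by
    simpa using ((hasDerivAt_inv htne).add_const a).sub_const b
  have h2 : HasDerivAt (fun s : ℝ => s⁻¹ + a + b) (-(t ^ 2)⁻¹) t := by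
    simpa using ((hasDerivAt_inv htne).add_const a).add_const b
  have hg := h1.div h2 hvpos.ne'
  have harc := ((Real.hasDerivAt_arctan ((t⁻¹ + a - b) / (t⁻¹ + a + b))).comp t hg).neg
  convert harc using 1
  case e'_4 | e'_5 | e'_8 => rfl
  have hD : ((1 + t * (a - b)) ^ 2 + (1 + t * (a + b)) ^ 2) ≠ 0 := (auxD_pos a b hb t).ne'
  field_simp
  ring

private lemma auxG' (a b : ℝ) (hb : 0 < b) (t : ℝ) :
    HasDerivAt (fun t : ℝ => 2 * b / ((1 + t * (a - b)) ^ 2 + (1 + t * (a + b)) ^ 2))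
      (-8 * b * (a + t * (a ^ 2 + b ^ 2)) /
        ((1 + t * (a - b)) ^ 2 + (1 + t * (a + b)) ^ 2) ^ 2) t := by
  have hd1 : HasDerivAt (fun s : ℝ => 1 + s * (a - b)) (a - b) t := by
    simpa using ((hasDerivAt_id t).mul_const (a - b)).const_add 1
  have hd2 : HasDerivAt (fun s : ℝ => 1 + s * (a + b)) (a + b) t := by
    simpa using ((hasDerivAt_id t).mul_const (a + b)).const_add 1
  have hd := (hd1.pow 2).add (hd2.pow 2)
  have hD : ((1 + t * (a - b)) ^ 2 + (1 + t * (a + b)) ^ 2) ≠ 0 := (auxD_pos a b hb t).ne'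
  have := (hasDerivAt_const t (2 * b)).div hd hD
  convert this using 1
  case e'_4 | e'_5 | e'_8 => rfl
  push_cast
  simp only [Pi.add_apply, Pi.pow_apply]
  field_simp
  ring

private lemma auxH_nonpos (a b : ℝ) (hab : a > b) (hb : 0 < b) (t : ℝ) (ht : 0 < t) :
    -8 * b * (a + t * (a ^ 2 + b ^ 2)) /
      ((1 + t * (a - b)) ^ 2 + (1 + t * (a + b)) ^ 2) ^ 2 ≤ 0 := by
  have ha : 0 < a := hb.trans hab
  apply div_nonpos_of_nonpos_of_nonneg
  · nlinarith [sq_nonneg a, sq_nonneg b, mul_pos ht (mul_pos hb hb), mul_pos ht (mul_pos ha ha)]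
  · positivity

theorem stmt_9 (a b : ℝ) (hab : a > b) (hb : 0 < b) :
    ConcaveOn ℝ (Set.Ioi 0)
      (fun t : ℝ => -Real.arctan ((t⁻¹ + a - b) / (t⁻¹ + a + b))) ∧
    ∀ t : ℝ, 0 < t →
      deriv (deriv (fun t : ℝ => -Real.arctan ((t⁻¹ + a - b) / (t⁻¹ + a + b)))) t =
        -8 * b * (a + t * (a ^ 2 + b ^ 2)) /
          ((1 + t * (a - b)) ^ 2 + (1 + t * (a + b)) ^ 2) ^ 2 ∧
      -8 * b * (a + t * (a ^ 2 + b ^ 2)) /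
          ((1 + t * (a - b)) ^ 2 + (1 + t * (a + b)) ^ 2) ^ 2 ≤ 0 := by
  constructor
  · apply concaveOn_of_hasDerivWithinAt2_nonpos
      (f' := fun t : ℝ => 2 * b / ((1 + t * (a - b)) ^ 2 + (1 + t * (a + b)) ^ 2))
      (f'' := fun t : ℝ => -8 * b * (a + t * (a ^ 2 + b ^ 2)) /
        ((1 + t * (a - b)) ^ 2 + (1 + t * (a + b)) ^ 2) ^ 2)
      (convex_Ioi 0)
    · intro x hx
      exact (auxF' a b hab hb x hx).continuousAt.continuousWithinAt
    · intro x hx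
      rw [interior_Ioi] at hx
      exact (auxF' a b hab hb x hx).hasDerivWithinAt
    · intro x hx
      exact (auxG' a b hb x).hasDerivWithinAt
    · intro x hx
      rw [interior_Ioi] at hx
      exact auxH_nonpos a b hab hb x hx
  · intro t ht
    refine ⟨?_, auxH_nonpos a b hab hb t ht⟩
    have hev : deriv (fun t : ℝ => -Real.arctan ((t⁻¹ + a - b) / (t⁻¹ + a + b))) =ᶠ[nhds t]
        (fun t : ℝ => 2 * b / ((1 + t * (a - b)) ^ 2 + (1 + t * (a + b)) ^ 2)) := by
      filter_upwards [isOpen_Ioi.mem_nhds ht] with y hy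
      exact (auxF' a b hab hb y hy).deriv
    rw [hev.deriv_eq]
    exact (auxG' a b hb t).deriv
end

section
/- For a > b > 0, the map from positive definite symmetric matrices given by F(A) = ∑ᵢ ln((λᵢ(A) + a − b)/(λᵢ(A) + a + b)) (λᵢ(A) the eigenvalues of A) satisfies F(A) = ln det((A + (a−b)I)(A + (a+b)I)⁻¹), and F is monotone: if A ≤ B (B − A positive semidefinite, both positive definite), then F(A) ≤ F(B). -/
open Matrix Finset

variable {n : ℕ}

-- real smul PSD
lemma psd_smul {M : Matrix (Fin n) (Fin n) ℝ} (hM : M.PosSemidef) {c : ℝ} (hc : 0 ≤ c) :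
    (c • M).PosSemidef := by
  refine Matrix.PosSemidef.of_dotProduct_mulVec_nonneg ?_ (fun x => ?_)
  · unfold Matrix.IsHermitian
    rw [Matrix.conjTranspose_smul, hM.1]
    simp [starRingEnd_apply]
  · have h0 := hM.dotProduct_mulVec_nonneg x
    rw [Matrix.smul_mulVec, dotProduct_smul, smul_eq_mul]
    positivity

lemma psd_smul_one {c : ℝ} (hc : 0 ≤ c) : ((c • 1 : Matrix (Fin n) (Fin n) ℝ)).PosSemidef := by
  rw [Matrix.smul_one_eq_diagonal]
  exact Matrix.PosSemidef.diagonal (fun i => hc)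

lemma pd_smul_one {c : ℝ} (hc : 0 < c) : ((c • 1 : Matrix (Fin n) (Fin n) ℝ)).PosDef := by
  rw [Matrix.smul_one_eq_diagonal]
  exact Matrix.PosDef.diagonal (fun i => hc)

lemma dot_self_eigvec {M : Matrix (Fin n) (Fin n) ℝ} (hM : M.IsHermitian) (i : Fin n) :
    (⇑(hM.eigenvectorBasis i)) ⬝ᵥ (⇑(hM.eigenvectorBasis i)) = 1 := by
  have h1 : ‖hM.eigenvectorBasis i‖ = 1 := hM.eigenvectorBasis.orthonormal.1 i
  have h2 : (inner ℝ (hM.eigenvectorBasis i) (hM.eigenvectorBasis i) : ℝ) = 1 := by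
    rw [real_inner_self_eq_norm_sq, h1]; norm_num
  rw [EuclideanSpace.inner_eq_star_dotProduct] at h2
  simpa using h2

lemma eig_ge {M : Matrix (Fin n) (Fin n) ℝ} (hM : M.IsHermitian) {c : ℝ}
    (h : (M - c • 1).PosSemidef) (i : Fin n) : c ≤ hM.eigenvalues i := by
  have hv := hM.eigenvalues_eq i
  set v := ⇑(hM.eigenvectorBasis i) with hvdef
  have hnorm : v ⬝ᵥ v = 1 := dot_self_eigvec hM i
  have h2 := h.dotProduct_mulVec_nonneg v
  rw [Matrix.sub_mulVec, dotProduct_sub] at h2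
  have hc1 : (c • (1 : Matrix (Fin n) (Fin n) ℝ)) *ᵥ v = c • v := by
    rw [Matrix.smul_mulVec, Matrix.one_mulVec]
  rw [hc1] at h2
  simp only [star_trivial, dotProduct_smul, smul_eq_mul, hnorm, mul_one] at h2 hv
  simp only [RCLike.re_to_real] at hv
  linarith

lemma eig_le {M : Matrix (Fin n) (Fin n) ℝ} (hM : M.IsHermitian) {c : ℝ}
    (h : (c • 1 - M).PosSemidef) (i : Fin n) : hM.eigenvalues i ≤ c := by
  have hv := hM.eigenvalues_eq i
  set v := ⇑(hM.eigenvectorBasis i) with hvdef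
  have hnorm : v ⬝ᵥ v = 1 := dot_self_eigvec hM i
  have h2 := h.dotProduct_mulVec_nonneg v
  rw [Matrix.sub_mulVec, dotProduct_sub] at h2
  have hc1 : (c • (1 : Matrix (Fin n) (Fin n) ℝ)) *ᵥ v = c • v := by
    rw [Matrix.smul_mulVec, Matrix.one_mulVec]
  rw [hc1] at h2
  simp only [star_trivial, dotProduct_smul, smul_eq_mul, hnorm, mul_one] at h2 hv
  simp only [RCLike.re_to_real] at hv
  linarith

lemma conj_diag_psd {M : Matrix (Fin n) (Fin n) ℝ} (hM : M.IsHermitian) {d : Fin n → ℝ}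
    (hd : ∀ i, 0 ≤ d i) :
    ((hM.eigenvectorUnitary : Matrix (Fin n) (Fin n) ℝ) * Matrix.diagonal d *
      star (hM.eigenvectorUnitary : Matrix (Fin n) (Fin n) ℝ)).PosSemidef := by
  have := (Matrix.PosSemidef.diagonal (fun i => hd i)).mul_mul_conjTranspose_same
    (hM.eigenvectorUnitary : Matrix (Fin n) (Fin n) ℝ)
  simpa [Matrix.star_eq_conjTranspose] using this

lemma diag_coe {M : Matrix (Fin n) (Fin n) ℝ} (hM : M.IsHermitian) :
    Matrix.diagonal (RCLike.ofReal ∘ hM.eigenvalues) = Matrix.diagonal hM.eigenvalues := rfl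

lemma sub_smul_one_eq {M : Matrix (Fin n) (Fin n) ℝ} (hM : M.IsHermitian) (c : ℝ) :
    M - c • 1 = (hM.eigenvectorUnitary : Matrix (Fin n) (Fin n) ℝ) *
      Matrix.diagonal (fun i => hM.eigenvalues i - c) *
      star (hM.eigenvectorUnitary : Matrix (Fin n) (Fin n) ℝ) := by
  set U := (hM.eigenvectorUnitary : Matrix (Fin n) (Fin n) ℝ) with hU
  have hU1 : U * star U = 1 := Matrix.mem_unitaryGroup_iff.mp hM.eigenvectorUnitary.2
  have hd : Matrix.diagonal (fun i => hM.eigenvalues i - c)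
      = Matrix.diagonal hM.eigenvalues - c • 1 := by
    rw [Matrix.smul_one_eq_diagonal, Matrix.diagonal_sub]
  rw [hd, Matrix.mul_sub, Matrix.sub_mul]
  have : U * (c • (1 : Matrix (Fin n) (Fin n) ℝ)) * star U = c • 1 := by
    rw [Matrix.mul_smul, Matrix.mul_one, Matrix.smul_mul, hU1]
  rw [this]
  congr 1
  conv_lhs => rw [hM.spectral_theorem]
  rw [diag_coe]
  rfl

lemma psd_of_eig_ge {M : Matrix (Fin n) (Fin n) ℝ} (hM : M.IsHermitian) {c : ℝ}
    (h : ∀ i, c ≤ hM.eigenvalues i) : (M - c • 1).PosSemidef := by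
  rw [sub_smul_one_eq hM c]
  exact conj_diag_psd hM (fun i => sub_nonneg.2 (h i))

lemma inv_spectral {M : Matrix (Fin n) (Fin n) ℝ} (hM : M.IsHermitian)
    (hpos : ∀ i, hM.eigenvalues i ≠ 0) :
    M⁻¹ = (hM.eigenvectorUnitary : Matrix (Fin n) (Fin n) ℝ) *
      Matrix.diagonal (fun i => (hM.eigenvalues i)⁻¹) *
      star (hM.eigenvectorUnitary : Matrix (Fin n) (Fin n) ℝ) := by
  set U := (hM.eigenvectorUnitary : Matrix (Fin n) (Fin n) ℝ) with hU
  have hU1 : U * star U = 1 := Matrix.mem_unitaryGroup_iff.mp hM.eigenvectorUnitary.2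
  have hU2 : star U * U = 1 := Matrix.mem_unitaryGroup_iff'.mp hM.eigenvectorUnitary.2
  apply Matrix.inv_eq_right_inv
  have key : (U * Matrix.diagonal hM.eigenvalues * star U) *
      (U * Matrix.diagonal (fun i => (hM.eigenvalues i)⁻¹) * star U) = 1 := by
    calc U * Matrix.diagonal hM.eigenvalues * star U *
          (U * Matrix.diagonal (fun i => (hM.eigenvalues i)⁻¹) * star U)
        = U * Matrix.diagonal hM.eigenvalues * (star U * U) *
          Matrix.diagonal (fun i => (hM.eigenvalues i)⁻¹) * star U := by
          simp only [Matrix.mul_assoc]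
      _ = U * (Matrix.diagonal hM.eigenvalues *
          Matrix.diagonal (fun i => (hM.eigenvalues i)⁻¹)) * star U := by
          rw [hU2, Matrix.mul_one]; simp only [Matrix.mul_assoc]
      _ = 1 := by
          rw [Matrix.diagonal_mul_diagonal]
          have : (fun i => hM.eigenvalues i * (hM.eigenvalues i)⁻¹) = fun _ => (1:ℝ) := by
            funext i; exact mul_inv_cancel₀ (hpos i)
          rw [this, Matrix.diagonal_one, Matrix.mul_one, hU1]
  have hMeq : M * (U * Matrix.diagonal (fun i => (hM.eigenvalues i)⁻¹) * star U)
      = (U * Matrix.diagonal hM.eigenvalues * star U) *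
        (U * Matrix.diagonal (fun i => (hM.eigenvalues i)⁻¹) * star U) := by
    congr 1
    conv_lhs => rw [hM.spectral_theorem]
    rfl
  rw [hMeq, key]

lemma inv_sub_one_psd {M : Matrix (Fin n) (Fin n) ℝ} (hM : M.IsHermitian)
    (hpos : ∀ i, 0 < hM.eigenvalues i) (hle : ∀ i, hM.eigenvalues i ≤ 1) :
    (M⁻¹ - 1).PosSemidef := by
  set U := (hM.eigenvectorUnitary : Matrix (Fin n) (Fin n) ℝ) with hU
  have hU1 : U * star U = 1 := Matrix.mem_unitaryGroup_iff.mp hM.eigenvectorUnitary.2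
  have heq : M⁻¹ - 1 = U * Matrix.diagonal (fun i => (hM.eigenvalues i)⁻¹ - 1) * star U := by
    have hd : Matrix.diagonal (fun i => (hM.eigenvalues i)⁻¹ - 1)
        = Matrix.diagonal (fun i => (hM.eigenvalues i)⁻¹) - 1 := by
      rw [← Matrix.diagonal_one, Matrix.diagonal_sub]
    rw [hd, Matrix.mul_sub, Matrix.sub_mul, Matrix.mul_one, hU1,
      ← inv_spectral hM (fun i => ne_of_gt (hpos i))]
  rw [heq]
  refine conj_diag_psd hM (fun i => ?_)
  have h1 : (1:ℝ) ≤ (hM.eigenvalues i)⁻¹ := by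
    rw [le_inv_comm₀ one_pos (hpos i)]
    simpa using hle i
  linarith

lemma det_conj {M : Matrix (Fin n) (Fin n) ℝ} (hM : M.IsHermitian) (d : Fin n → ℝ) :
    ((hM.eigenvectorUnitary : Matrix (Fin n) (Fin n) ℝ) * Matrix.diagonal d *
      star (hM.eigenvectorUnitary : Matrix (Fin n) (Fin n) ℝ)).det = ∏ i, d i := by
  set U := (hM.eigenvectorUnitary : Matrix (Fin n) (Fin n) ℝ) with hU
  have hU1 : U * star U = 1 := Matrix.mem_unitaryGroup_iff.mp hM.eigenvectorUnitary.2
  have hdet : U.det * (star U).det = 1 := by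
    rw [← Matrix.det_mul, hU1, Matrix.det_one]
  rw [Matrix.det_mul, Matrix.det_mul, Matrix.det_diagonal]
  calc U.det * (∏ i, d i) * (star U).det = (∏ i, d i) * (U.det * (star U).det) := by ring
    _ = ∏ i, d i := by rw [hdet, mul_one]

lemma det_add_smul_one {M : Matrix (Fin n) (Fin n) ℝ} (hM : M.IsHermitian) (c : ℝ) :
    (M + c • 1).det = ∏ i, (hM.eigenvalues i + c) := by
  have h := sub_smul_one_eq hM (-c)
  rw [neg_smul, sub_neg_eq_add] at h
  rw [h, det_conj hM]
  congr 1
  funext i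
  ring

lemma det_mono {X Y : Matrix (Fin n) (Fin n) ℝ} (hX : X.PosDef) (hXY : (Y - X).PosSemidef) :
    X.det ≤ Y.det := by
  obtain ⟨S, hS, hSS⟩ : ∃ S : Matrix (Fin n) (Fin n) ℝ, S.PosSemidef ∧ S * S = X := by
    open MatrixOrder in
    exact ⟨CFC.sqrt X, (CFC.sqrt_nonneg X).posSemidef, CFC.sqrt_mul_sqrt_self X hX.posSemidef.nonneg⟩
  have hdetX : 0 < X.det := hX.det_pos
  have hdetS : S.det ≠ 0 := by
    intro h
    rw [← hSS, Matrix.det_mul, h, mul_zero] at hdetX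
    exact lt_irrefl _ hdetX
  have hunit : IsUnit S.det := isUnit_iff_ne_zero.mpr hdetS
  have hSinv : S⁻¹ * S = 1 := Matrix.nonsing_inv_mul S hunit
  have hSinv' : S * S⁻¹ = 1 := Matrix.mul_nonsing_inv S hunit
  have hSh : (S⁻¹)ᴴ = S⁻¹ := hS.1.inv
  set C := S⁻¹ * Y * S⁻¹ with hCdef
  have hXone : S⁻¹ * X * S⁻¹ = 1 := by
    rw [← hSS]
    calc S⁻¹ * (S * S) * S⁻¹ = (S⁻¹ * S) * (S * S⁻¹) := by simp only [Matrix.mul_assoc]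
      _ = 1 := by rw [hSinv, hSinv', mul_one]
  have hC1 : (C - 1).PosSemidef := by
    have hcong := hXY.conjTranspose_mul_mul_same S⁻¹
    have heq : (S⁻¹)ᴴ * (Y - X) * S⁻¹ = C - 1 := by
      rw [hSh, Matrix.mul_sub, Matrix.sub_mul, hXone]
    rwa [heq] at hcong
  have hCh : C.IsHermitian := by
    have h2 := hC1.1.add (Matrix.isHermitian_one)
    rwa [sub_add_cancel] at h2
  have heig : ∀ i, 1 ≤ hCh.eigenvalues i := by
    intro i
    refine eig_ge hCh ?_ i
    simpa using hC1
  have hdetC : 1 ≤ C.det := by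
    rw [hCh.det_eq_prod_eigenvalues]
    calc (1:ℝ) = ∏ _i : Fin n, 1 := by simp
      _ ≤ ∏ i, hCh.eigenvalues i :=
        Finset.prod_le_prod (fun _ _ => zero_le_one) (fun i _ => heig i)
  have hYeq : Y = S * C * S := by
    calc Y = (S * S⁻¹) * Y * (S⁻¹ * S) := by rw [hSinv, hSinv', one_mul, mul_one]
      _ = S * C * S := by simp only [hCdef, Matrix.mul_assoc]
  have hXdet : X.det = S.det * S.det := by rw [← hSS, Matrix.det_mul]
  rw [hYeq, Matrix.det_mul, Matrix.det_mul]
  nlinarith [sq_nonneg S.det, hdetX]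

lemma inv_antitone {X Y : Matrix (Fin n) (Fin n) ℝ} (hX : X.PosDef) (hY : Y.PosDef)
    (h : (Y - X).PosSemidef) : (X⁻¹ - Y⁻¹).PosSemidef := by
  obtain ⟨T, hT, hTT⟩ : ∃ T : Matrix (Fin n) (Fin n) ℝ, T.PosSemidef ∧ T * T = Y := by
    open MatrixOrder in
    exact ⟨CFC.sqrt Y, (CFC.sqrt_nonneg Y).posSemidef, CFC.sqrt_mul_sqrt_self Y hY.posSemidef.nonneg⟩
  have hdetY : 0 < Y.det := hY.det_pos
  have hdetT : T.det ≠ 0 := by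
    intro hh
    rw [← hTT, Matrix.det_mul, hh, mul_zero] at hdetY
    exact lt_irrefl _ hdetY
  have hunit : IsUnit T.det := isUnit_iff_ne_zero.mpr hdetT
  have hTinv : T⁻¹ * T = 1 := Matrix.nonsing_inv_mul T hunit
  have hTinv' : T * T⁻¹ = 1 := Matrix.mul_nonsing_inv T hunit
  have hTh : (T⁻¹)ᴴ = T⁻¹ := hT.1.inv
  set C := T⁻¹ * X * T⁻¹ with hCdef
  have hYone : T⁻¹ * Y * T⁻¹ = 1 := by
    rw [← hTT]
    calc T⁻¹ * (T * T) * T⁻¹ = (T⁻¹ * T) * (T * T⁻¹) := by simp only [Matrix.mul_assoc]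
      _ = 1 := by rw [hTinv, hTinv', mul_one]
  have hC0 : C.PosSemidef := by
    have hcong := hX.posSemidef.conjTranspose_mul_mul_same T⁻¹
    rwa [hTh] at hcong
  have hCh : C.IsHermitian := hC0.1
  have h1C : (1 - C).PosSemidef := by
    have hcong := h.conjTranspose_mul_mul_same T⁻¹
    have heq : (T⁻¹)ᴴ * (Y - X) * T⁻¹ = 1 - C := by
      rw [hTh, Matrix.mul_sub, Matrix.sub_mul, hYone]
    rwa [heq] at hcong
  have heigle : ∀ i, hCh.eigenvalues i ≤ 1 := by
    intro i
    refine eig_le hCh ?_ i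
    simpa using h1C
  have hdetTi : T⁻¹.det ≠ 0 := by
    have : T.det * T⁻¹.det = 1 := by rw [← Matrix.det_mul, hTinv', Matrix.det_one]
    intro hh
    rw [hh, mul_zero] at this
    exact zero_ne_one this
  have hdetC : C.det ≠ 0 := by
    rw [hCdef, Matrix.det_mul, Matrix.det_mul]
    exact mul_ne_zero (mul_ne_zero hdetTi (ne_of_gt hX.det_pos)) hdetTi
  have heigpos : ∀ i, 0 < hCh.eigenvalues i := by
    intro i
    have hnn := hC0.eigenvalues_nonneg i
    rcases lt_or_eq_of_le hnn with h' | h'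
    · exact h'
    · exfalso
      apply hdetC
      rw [hCh.det_eq_prod_eigenvalues]
      exact Finset.prod_eq_zero (Finset.mem_univ i) (by rw [← h']; simp)
  have hkey : (C⁻¹ - 1).PosSemidef := inv_sub_one_psd hCh heigpos heigle
  have hXeq : X = T * C * T := by
    calc X = (T * T⁻¹) * X * (T⁻¹ * T) := by rw [hTinv, hTinv', one_mul, mul_one]
      _ = T * C * T := by simp only [hCdef, Matrix.mul_assoc]
  have hXinv : X⁻¹ = T⁻¹ * (C⁻¹ * T⁻¹) := by
    rw [hXeq, Matrix.mul_inv_rev, Matrix.mul_inv_rev]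
  have hYinv : Y⁻¹ = T⁻¹ * T⁻¹ := by rw [← hTT, Matrix.mul_inv_rev]
  have heq2 : X⁻¹ - Y⁻¹ = (T⁻¹)ᴴ * (C⁻¹ - 1) * T⁻¹ := by
    rw [hTh, Matrix.mul_sub, Matrix.sub_mul, Matrix.mul_one, hXinv, hYinv, Matrix.mul_assoc]
  rw [heq2]
  exact hkey.conjTranspose_mul_mul_same T⁻¹

lemma sum_log_eq {a b : ℝ} (hab : a > b) (hb : 0 < b)
    {A : Matrix (Fin n) (Fin n) ℝ} (hA : A.PosDef) :
    ∑ i, Real.log ((hA.1.eigenvalues i + a - b) / (hA.1.eigenvalues i + a + b)) =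
      Real.log ((A + (a - b) • (1 : Matrix (Fin n) (Fin n) ℝ)) *
        (A + (a + b) • (1 : Matrix (Fin n) (Fin n) ℝ))⁻¹).det := by
  have hdet : ((A + (a - b) • 1) * (A + (a + b) • 1)⁻¹ : Matrix (Fin n) (Fin n) ℝ).det
      = (∏ i, (hA.1.eigenvalues i + a - b)) / (∏ i, (hA.1.eigenvalues i + a + b)) := by
    rw [Matrix.det_mul, Matrix.det_nonsing_inv, det_add_smul_one hA.1, det_add_smul_one hA.1,
        Ring.inverse_eq_inv', div_eq_mul_inv]
    congr 1
    · exact Finset.prod_congr rfl (fun i _ => by ring)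
    · congr 1
      exact Finset.prod_congr rfl (fun i _ => by ring)
  rw [hdet, ← Finset.prod_div_distrib]
  have hpos : ∀ i, 0 < hA.1.eigenvalues i := fun i => hA.eigenvalues_pos i
  refine (Real.log_prod (fun i _ => ?_)).symm
  have h1 : 0 < hA.1.eigenvalues i + a - b := by have := hpos i; linarith
  have h2 : 0 < hA.1.eigenvalues i + a + b := by have := hpos i; linarith
  exact ne_of_gt (div_pos h1 h2)

lemma det_pos_quot {a b : ℝ} (hab : a > b) (hb : 0 < b)
    {A : Matrix (Fin n) (Fin n) ℝ} (hA : A.PosDef) :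
    (0:ℝ) < (∏ i, (hA.1.eigenvalues i + a - b)) / (∏ i, (hA.1.eigenvalues i + a + b)) := by
  have hpos : ∀ i, 0 < hA.1.eigenvalues i := fun i => hA.eigenvalues_pos i
  apply div_pos
  · exact Finset.prod_pos (fun i _ => by have := hpos i; linarith)
  · exact Finset.prod_pos (fun i _ => by have := hpos i; linarith)

theorem stmt_19 {n : ℕ} (a b : ℝ) (hab : a > b) (hb : 0 < b)
    (A B : Matrix (Fin n) (Fin n) ℝ) (hA : A.PosDef) (hB : B.PosDef) :
    (∑ i, Real.log ((hA.1.eigenvalues i + a - b) / (hA.1.eigenvalues i + a + b)) =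
      Real.log ((A + (a - b) • (1 : Matrix (Fin n) (Fin n) ℝ)) *
        (A + (a + b) • (1 : Matrix (Fin n) (Fin n) ℝ))⁻¹).det) ∧
    ((B - A).PosSemidef →
      ∑ i, Real.log ((hA.1.eigenvalues i + a - b) / (hA.1.eigenvalues i + a + b)) ≤
        ∑ i, Real.log ((hB.1.eigenvalues i + a - b) / (hB.1.eigenvalues i + a + b))) := by
  refine ⟨sum_log_eq hab hb hA, fun hBA => ?_⟩
  rw [sum_log_eq hab hb hA, sum_log_eq hab hb hB]
  set MA := A + (a + b) • (1 : Matrix (Fin n) (Fin n) ℝ) with hMAdef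
  set NA := A + (a - b) • (1 : Matrix (Fin n) (Fin n) ℝ) with hNAdef
  set MB := B + (a + b) • (1 : Matrix (Fin n) (Fin n) ℝ) with hMBdef
  set NB := B + (a - b) • (1 : Matrix (Fin n) (Fin n) ℝ) with hNBdef
  have hOne : ((a+b) • (1 : Matrix (Fin n) (Fin n) ℝ)).PosSemidef := psd_smul_one (by linarith)
  have hMA : MA.PosDef := hA.add_posSemidef hOne
  have hMB : MB.PosDef := hB.add_posSemidef hOne
  have hMAu : IsUnit MA.det := isUnit_iff_ne_zero.mpr (ne_of_gt hMA.det_pos)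
  have hMBu : IsUnit MB.det := isUnit_iff_ne_zero.mpr (ne_of_gt hMB.det_pos)
  have hGAeq : NA * MA⁻¹ = 1 - (2*b) • MA⁻¹ := by
    have h1 : NA = MA - (2*b) • (1 : Matrix (Fin n) (Fin n) ℝ) := by
      rw [hNAdef, hMAdef]
      have h2 : (a - b) = (a + b) - 2*b := by ring
      rw [h2, sub_smul]
      abel
    rw [h1, Matrix.sub_mul, Matrix.mul_nonsing_inv _ hMAu, Matrix.smul_mul, Matrix.one_mul]
  have hGBeq : NB * MB⁻¹ = 1 - (2*b) • MB⁻¹ := by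
    have h1 : NB = MB - (2*b) • (1 : Matrix (Fin n) (Fin n) ℝ) := by
      rw [hNBdef, hMBdef]
      have h2 : (a - b) = (a + b) - 2*b := by ring
      rw [h2, sub_smul]
      abel
    rw [h1, Matrix.sub_mul, Matrix.mul_nonsing_inv _ hMBu, Matrix.smul_mul, Matrix.one_mul]
  have hanti : (MA⁻¹ - MB⁻¹).PosSemidef := by
    apply inv_antitone hMA hMB
    have h3 : MB - MA = B - A := by rw [hMBdef, hMAdef]; abel
    rwa [h3]
  have hdiff : (NB * MB⁻¹ - NA * MA⁻¹).PosSemidef := by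
    have h2 := psd_smul hanti (by linarith : (0:ℝ) ≤ 2*b)
    have h3 : NB * MB⁻¹ - NA * MA⁻¹ = (2*b) • (MA⁻¹ - MB⁻¹) := by
      rw [hGAeq, hGBeq, smul_sub]
      abel
    rwa [h3]
  have hGApd : (NA * MA⁻¹).PosDef := by
    have hne : (a + b) ≠ 0 := by linarith
    have hP : ((a+b) • (1 : Matrix (Fin n) (Fin n) ℝ)).PosDef := pd_smul_one (by linarith)
    have h1 : (MA - (a+b) • (1 : Matrix (Fin n) (Fin n) ℝ)).PosSemidef := by
      have h4 : MA - (a+b) • (1 : Matrix (Fin n) (Fin n) ℝ) = A := by rw [hMAdef]; abel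
      rw [h4]; exact hA.posSemidef
    have h2 : (((a+b) • (1 : Matrix (Fin n) (Fin n) ℝ))⁻¹ - MA⁻¹).PosSemidef :=
      inv_antitone hP hMA h1
    have hPinv : ((a+b) • (1 : Matrix (Fin n) (Fin n) ℝ))⁻¹
        = (a+b)⁻¹ • (1 : Matrix (Fin n) (Fin n) ℝ) := by
      apply Matrix.inv_eq_right_inv
      rw [Matrix.smul_mul, Matrix.mul_smul, Matrix.one_mul, smul_smul,
        mul_inv_cancel₀ hne, one_smul]
    rw [hPinv] at h2
    have key : NA * MA⁻¹ = ((a-b)/(a+b)) • (1 : Matrix (Fin n) (Fin n) ℝ)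
        + (2*b) • ((a+b)⁻¹ • (1 : Matrix (Fin n) (Fin n) ℝ) - MA⁻¹) := by
      rw [hGAeq, smul_sub, smul_smul, ← add_sub_assoc, ← add_smul]
      have h5 : (a-b)/(a+b) + 2*b * (a+b)⁻¹ = 1 := by field_simp; ring
      rw [h5, one_smul]
    rw [key]
    exact (pd_smul_one (div_pos (by linarith) (by linarith))).add_posSemidef
      (psd_smul h2 (by linarith))
  exact Real.log_le_log hGApd.det_pos (det_mono hGApd hdiff)
end
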